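/- Every finite abelian quandle (X,◁) with r orbits is isomorphic, via a ◁-preserving bijection, to a filtered-permutation quandle on r components in which each A_i is a finite abelian group generated by the set {x_i(k) : k ∈ ℤ/r}. -/

import Mathlib

variable {X : Type*}

/-- Quandle axioms for a binary operation `op` (right-translation convention):
self-distributivity, bijectivity of right translations, idempotence. -/
structure IsQuandleOp (op : X → X → X) : Prop where
  sd : ∀ a b c, op (op a b) c = op (op a c) (op b c)
  bij : ∀ b, Function.Bijective fun a => op a b
  idem : ∀ a, op a a = a

/-- A quandle operation is abelian if `(a ◁ b) ◁ c = (a ◁ c) ◁ b`. -/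
def IsAbelianOp (op : X → X → X) : Prop :=
  ∀ a b c, op (op a b) c = op (op a c) b

/-- The smallest equivalence relation identifying `a` with `op a b`. -/
def orbitRel (op : X → X → X) : X → X → Prop :=
  Relation.EqvGen fun a b => ∃ c, op a c = b

/-- The setoid of orbits of a quandle. -/
def orbitSetoid (op : X → X → X) : Setoid X :=
  ⟨orbitRel op, Relation.EqvGen.is_equivalence _⟩

/-- The filtered-permutation (FP) quandle operation on `⊔_{i ∈ ℤ/r} A i`:
`a ◁ b = a + x i (j - i)` for `a ∈ A i`, `b ∈ A j`. -/
def fpOp {r : ℕ} (A : ZMod r → Type*) [∀ i, AddCommGroup (A i)]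
    (x : (i : ZMod r) → ZMod r → A i) :
    (Σ i, A i) → (Σ i, A i) → (Σ i, A i) :=
  fun a b => ⟨a.1, a.2 + x a.1 (b.1 - a.1)⟩

namespace AbelianQuandleFP

variable {op : X → X → X}

/-- The right translation by `b` as a permutation. -/
noncomputable def Rt (hq : IsQuandleOp op) (b : X) : Equiv.Perm X :=
  Equiv.ofBijective _ (hq.bij b)

theorem Rt_apply (hq : IsQuandleOp op) (b a : X) : Rt hq b a = op a b := rfl

theorem Rt_comm (hq : IsQuandleOp op) (hab : IsAbelianOp op) (b c : X) :
    Rt hq b * Rt hq c = Rt hq c * Rt hq b := by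
  apply Equiv.ext
  intro a
  simp only [Equiv.Perm.mul_apply, Rt_apply]
  exact hab a c b

theorem Rt_op (hq : IsQuandleOp op) (hab : IsAbelianOp op) (b c : X) :
    Rt hq (op b c) = Rt hq b := by
  apply Equiv.ext
  intro a
  obtain ⟨d, rfl⟩ := (hq.bij c).2 a
  show op (op d c) (op b c) = op (op d c) b
  rw [← hq.sd, hab]

theorem Rt_orbit (hq : IsQuandleOp op) (hab : IsAbelianOp op) {b b' : X}
    (h : orbitRel op b b') : Rt hq b = Rt hq b' := by
  have h' : Relation.EqvGen (fun a b => ∃ c, op a c = b) b b' := h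
  clear h
  induction h' with
  | rel a b hab' => obtain ⟨c, rfl⟩ := hab'; exact (Rt_op hq hab a c).symm
  | refl a => rfl
  | symm a b _ ih => exact ih.symm
  | trans a b c _ _ ih1 ih2 => exact ih1.trans ih2

/-- The common right translation of an orbit. -/
noncomputable def sig (hq : IsQuandleOp op) (hab : IsAbelianOp op) :
    Quotient (orbitSetoid op) → Equiv.Perm X :=
  Quotient.lift (Rt hq) fun _ _ h => Rt_orbit hq hab h

theorem sig_mk (hq : IsQuandleOp op) (hab : IsAbelianOp op) (b : X) :
    sig hq hab (Quotient.mk (orbitSetoid op) b) = Rt hq b := rfl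

theorem sig_apply (hq : IsQuandleOp op) (hab : IsAbelianOp op) (b a : X) :
    sig hq hab (Quotient.mk (orbitSetoid op) b) a = op a b := rfl

/-- The (abelian) group generated by all right translations. -/
noncomputable def Gq (hq : IsQuandleOp op) (hab : IsAbelianOp op) :
    Subgroup (Equiv.Perm X) :=
  Subgroup.closure (Set.range (sig hq hab))

theorem sig_mem (hq : IsQuandleOp op) (hab : IsAbelianOp op) (q : Quotient (orbitSetoid op)) :
    sig hq hab q ∈ Gq hq hab :=
  Subgroup.subset_closure ⟨q, rfl⟩

theorem Gq_commute (hq : IsQuandleOp op) (hab : IsAbelianOp op) {g h : Equiv.Perm X}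
    (hg : g ∈ Gq hq hab) (hh : h ∈ Gq hq hab) : g * h = h * g := by
  refine Subgroup.closure_induction₂ (p := fun x y _ _ => Commute x y)
    ?_ ?_ ?_ ?_ ?_ ?_ ?_ hg hh
  · rintro x y ⟨q, rfl⟩ ⟨q', rfl⟩
    induction q using Quotient.ind
    induction q' using Quotient.ind
    exact Rt_comm hq hab _ _
  · exact fun x _ => Commute.one_left x
  · exact fun x _ => Commute.one_right x
  · exact fun x y z _ _ _ h1 h2 => h1.mul_left h2
  · exact fun y z x _ _ _ h1 h2 => h1.mul_right h2
  · exact fun x y _ _ h1 => h1.inv_left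
  · exact fun x y _ _ h1 => h1.inv_right

theorem Gmul_comm (hq : IsQuandleOp op) (hab : IsAbelianOp op) (g h : Gq hq hab) :
    g * h = h * g :=
  Subtype.ext (Gq_commute hq hab g.2 h.2)

theorem Gq_orbit (hq : IsQuandleOp op) (hab : IsAbelianOp op) {g : Equiv.Perm X}
    (hg : g ∈ Gq hq hab) : ∀ a : X, orbitRel op (g a) a := by
  refine Subgroup.closure_induction (p := fun x _ => ∀ a, orbitRel op (x a) a)
    ?_ ?_ ?_ ?_ hg
  · rintro x ⟨q, rfl⟩ a
    induction q using Quotient.ind with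
    | _ b =>
      rw [sig_apply]
      exact (Relation.EqvGen.rel a (op a b) ⟨b, rfl⟩).symm _ _
  · intro a; exact Relation.EqvGen.refl a
  · intro x y _ _ ihx ihy a
    simp only [Equiv.Perm.mul_apply]
    exact (ihx (y a)).trans _ _ _ (ihy a)
  · intro x _ ihx a
    have := ihx (x⁻¹ a)
    rw [Equiv.Perm.coe_inv, Equiv.apply_symm_apply] at this
    exact this.symm _ _

theorem exists_g (hq : IsQuandleOp op) (hab : IsAbelianOp op) {a b : X}
    (h : orbitRel op a b) : ∃ g : Equiv.Perm X, g ∈ Gq hq hab ∧ g b = a := by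
  have h' : Relation.EqvGen (fun a b => ∃ c, op a c = b) a b := h
  clear h
  induction h' with
  | rel x y hxy =>
    obtain ⟨c, rfl⟩ := hxy
    refine ⟨(sig hq hab (Quotient.mk (orbitSetoid op) c))⁻¹,
      inv_mem (sig_mem hq hab _), ?_⟩
    have : sig hq hab (Quotient.mk (orbitSetoid op) c) x = op x c := rfl
    rw [← this, Equiv.Perm.coe_inv, Equiv.symm_apply_apply]
  | refl x => exact ⟨1, one_mem _, rfl⟩
  | symm x y _ ih =>
    obtain ⟨g, hg, hgy⟩ := ih
    exact ⟨g⁻¹, inv_mem hg, by rw [← hgy, Equiv.Perm.coe_inv, Equiv.symm_apply_apply]⟩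
  | trans x y z _ _ ih1 ih2 =>
    obtain ⟨g, hg, hgy⟩ := ih1
    obtain ⟨k, hk, hkz⟩ := ih2
    exact ⟨g * k, mul_mem hg hk, by simp [Equiv.Perm.mul_apply, hkz, hgy]⟩

/-- The stabilizer of the base point of the orbit `q`. -/
noncomputable def Sq (hq : IsQuandleOp op) (hab : IsAbelianOp op)
    (q : Quotient (orbitSetoid op)) : Subgroup (Gq hq hab) where
  carrier := {g | (g : Equiv.Perm X) q.out = q.out}
  one_mem' := rfl
  mul_mem' := by
    intro g h hg hh
    show ((g * h : Gq hq hab) : Equiv.Perm X) q.out = q.out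
    rw [Subgroup.coe_mul, Equiv.Perm.mul_apply, hh, hg]
  inv_mem' := by
    intro g hg
    have h2 : ((g⁻¹ : Gq hq hab) : Equiv.Perm X) ((g : Equiv.Perm X) q.out) = q.out := by
      have h3 : ((g⁻¹ : Gq hq hab) : Equiv.Perm X) = ((g : Gq hq hab) : Equiv.Perm X)⁻¹ := rfl
      rw [h3, Equiv.Perm.coe_inv, Equiv.symm_apply_apply]
    show ((g⁻¹ : Gq hq hab) : Equiv.Perm X) q.out = q.out
    conv_lhs => rw [← hg]
    exact h2

theorem Sq_normal (hq : IsQuandleOp op) (hab : IsAbelianOp op)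
    (q : Quotient (orbitSetoid op)) : (Sq hq hab q).Normal := by
  constructor
  intro n hn g
  have : g * n * g⁻¹ = n := by
    rw [Gmul_comm hq hab g n, mul_inv_cancel_right]
  rw [this]; exact hn

/-- The abelian group attached to the orbit `q`. -/
abbrev Aq (hq : IsQuandleOp op) (hab : IsAbelianOp op)
    (q : Quotient (orbitSetoid op)) : Type _ :=
  Additive (Gq hq hab ⧸ Sq hq hab q)

noncomputable def AqAddCommGroup (hq : IsQuandleOp op) (hab : IsAbelianOp op)
    (q : Quotient (orbitSetoid op)) : AddCommGroup (Aq hq hab q) := by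
  haveI := Sq_normal hq hab q
  letI : CommGroup (Gq hq hab ⧸ Sq hq hab q) :=
    { (inferInstance : Group (Gq hq hab ⧸ Sq hq hab q)) with
      mul_comm := fun a b => by
        induction a using QuotientGroup.induction_on
        induction b using QuotientGroup.induction_on
        rw [← QuotientGroup.mk_mul, ← QuotientGroup.mk_mul, Gmul_comm hq hab] }
  exact Additive.addCommGroup

/-- The map from the group attached to orbit `q` back to `X`. -/
noncomputable def psi (hq : IsQuandleOp op) (hab : IsAbelianOp op)
    (q : Quotient (orbitSetoid op)) : Aq hq hab q → X := fun c =>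
  Quotient.liftOn' (Additive.toMul c) (fun g => (g : Equiv.Perm X) q.out)
    (by
      intro g h hrel
      rw [QuotientGroup.leftRel_apply] at hrel
      have hone : ((g⁻¹ * h : Gq hq hab) : Equiv.Perm X) q.out = q.out := hrel
      have : (h : Equiv.Perm X) = (g : Equiv.Perm X) * ((g⁻¹ * h : Gq hq hab) : Equiv.Perm X) := by
        push_cast
        group
      show (g : Equiv.Perm X) q.out = (h : Equiv.Perm X) q.out
      rw [this, Equiv.Perm.mul_apply, hone])

theorem psi_mk (hq : IsQuandleOp op) (hab : IsAbelianOp op)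
    (q : Quotient (orbitSetoid op)) (g : Gq hq hab) :
    psi hq hab q (Additive.ofMul (QuotientGroup.mk g)) = (g : Equiv.Perm X) q.out := rfl


universe u

theorem orbit_map {X : Type*} {Y : Type*} (w : X ≃ Y) (op : X → X → X) (op' : Y → Y → Y)
    (hop : ∀ a b : X, op' (w a) (w b) = w (op a b)) {a b : X} (h : orbitRel op a b) :
    orbitRel op' (w a) (w b) := by
  have h' : Relation.EqvGen (fun a b => ∃ c, op a c = b) a b := h
  clear h
  induction h' with
  | rel x y hxy =>
    obtain ⟨c, rfl⟩ := hxy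
    exact Relation.EqvGen.rel _ _ ⟨w c, by rw [hop]⟩
  | refl x => exact Relation.EqvGen.refl _
  | symm x y _ ih => exact Relation.EqvGen.symm _ _ ih
  | trans x y z _ _ ih1 ih2 => exact Relation.EqvGen.trans _ _ _ ih1 ih2

theorem orbit_iff {X : Type*} {Y : Type*} (w : X ≃ Y) (op : X → X → X) (op' : Y → Y → Y)
    (hop : ∀ a b : X, op' (w a) (w b) = w (op a b)) (a b : X) :
    orbitRel op a b ↔ orbitRel op' (w a) (w b) := by
  constructor
  · exact orbit_map w op op' hop
  · intro h
    have hop' : ∀ a b : Y, op (w.symm a) (w.symm b) = w.symm (op' a b) := by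
      intro a b
      have := hop (w.symm a) (w.symm b)
      rw [w.apply_symm_apply, w.apply_symm_apply] at this
      rw [this, w.symm_apply_apply]
    have := orbit_map w.symm op' op hop' h
    rwa [w.symm_apply_apply, w.symm_apply_apply] at this

theorem main {X : Type u} [Finite X] (op : X → X → X)
    (hq : IsQuandleOp op) (hab : IsAbelianOp op) (r : ℕ) (hr : 1 ≤ r)
    (horb : Nat.card (Quotient (orbitSetoid op)) = r) :
    ∃ (A : ZMod r → AddCommGrpCat.{u}) (x : (i : ZMod r) → ZMod r → A i),
      (∀ i, x i 0 = 0) ∧ (∀ i, Finite (A i)) ∧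
      (∀ i, AddSubgroup.closure (Set.range (x i)) = ⊤) ∧
      ∃ f : X ≃ Σ i, (A i : Type u),
        ∀ a b : X, f (op a b) = fpOp (fun i => (A i : Type u)) x (f a) (f b) := by
  haveI : NeZero r := ⟨by omega⟩
  -- an equivalence between the set of orbits and ZMod r
  obtain ⟨ι⟩ : Nonempty (Quotient (orbitSetoid op) ≃ ZMod r) :=
    Finite.card_eq.mp (by rw [horb, Nat.card_zmod])
  haveI hnorm : ∀ q, (Sq hq hab q).Normal := fun q => Sq_normal hq hab q
  letI Ainst : ∀ i : ZMod r, AddCommGroup (Aq hq hab (ι.symm i)) :=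
    fun i => AqAddCommGroup hq hab (ι.symm i)
  letI x' : (i : ZMod r) → ZMod r → Aq hq hab (ι.symm i) := fun i k =>
    Additive.ofMul (QuotientGroup.mk ⟨sig hq hab (ι.symm (i + k)), sig_mem hq hab _⟩)
  refine ⟨fun i => AddCommGrpCat.of (Aq hq hab (ι.symm i)), x', ?_, ?_, ?_, ?_⟩
  · -- x i 0 = 0
    intro i
    haveI := hnorm (ι.symm i)
    show Additive.ofMul (QuotientGroup.mk _) = Additive.ofMul (1 : Gq hq hab ⧸ Sq hq hab (ι.symm i))
    congr 1
    rw [QuotientGroup.eq_one_iff]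
    show sig hq hab (ι.symm (i + 0)) (ι.symm i).out = (ι.symm i).out
    rw [add_zero]
    have hfix : sig hq hab (Quotient.mk (orbitSetoid op) (ι.symm i).out) (ι.symm i).out
        = (ι.symm i).out := hq.idem _
    rwa [Quotient.out_eq] at hfix
  · -- finiteness
    intro i
    haveI : Finite (Gq hq hab (op := op)) := Subtype.finite
    exact Quotient.finite _
  · -- generation
    intro i
    rw [AddSubgroup.eq_top_iff']
    intro a
    obtain ⟨g, rfl⟩ : ∃ g : Gq hq hab, Additive.ofMul (QuotientGroup.mk g) = a := by
      obtain ⟨g, hg⟩ := QuotientGroup.mk_surjective (Additive.toMul a)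
      exact ⟨g, congrArg Additive.ofMul hg⟩
    obtain ⟨g, hg⟩ := g
    refine Subgroup.closure_induction
      (p := fun p hp => Additive.ofMul
        (QuotientGroup.mk (⟨p, hp⟩ : Gq hq hab)) ∈ AddSubgroup.closure
          (Set.range fun k => Additive.ofMul (QuotientGroup.mk
            (⟨sig hq hab (ι.symm (i + k)), sig_mem hq hab _⟩ : Gq hq hab))))
      ?_ ?_ ?_ ?_ hg
    · rintro p ⟨q', rfl⟩
      refine AddSubgroup.subset_closure ⟨ι q' - i, ?_⟩
      have harg : i + (ι q' - i) = ι q' := by ring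
      simp only [harg, ι.symm_apply_apply]
    · exact AddSubgroup.zero_mem _
    · intro p p' hp hp' ihp ihp'
      have : (⟨p * p', mul_mem hp hp'⟩ : Gq hq hab) = ⟨p, hp⟩ * ⟨p', hp'⟩ := rfl
      rw [this, QuotientGroup.mk_mul]
      exact AddSubgroup.add_mem _ ihp ihp'
    · intro p hp ihp
      have : (⟨p⁻¹, inv_mem hp⟩ : Gq hq hab) = (⟨p, hp⟩ : Gq hq hab)⁻¹ := rfl
      rw [this, QuotientGroup.mk_inv]
      exact AddSubgroup.neg_mem _ ihp
  · -- the isomorphism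
    set F : (Σ i : ZMod r, Aq hq hab (ι.symm i)) → X :=
      fun p => psi hq hab (ι.symm p.1) p.2 with hF
    have hFmk : ∀ (i : ZMod r) (g : Gq hq hab (op := op)),
        F ⟨i, Additive.ofMul (QuotientGroup.mk g)⟩ = (g : Equiv.Perm X) (ι.symm i).out :=
      fun i g => rfl
    have hsurj : ∀ p : Σ i : ZMod r, Aq hq hab (ι.symm i),
        ∃ (i : ZMod r) (g : Gq hq hab (op := op)),
          p = ⟨i, Additive.ofMul (QuotientGroup.mk g)⟩ := by
      rintro ⟨i, c⟩
      obtain ⟨g, hg⟩ := QuotientGroup.mk_surjective (Additive.toMul c)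
      exact ⟨i, g, by rw [hg]; rfl⟩
    have hπ : ∀ (q : Quotient (orbitSetoid op)) (g : Gq hq hab (op := op)),
        Quotient.mk (orbitSetoid op) ((g : Equiv.Perm X) q.out) = q := by
      intro q g
      have := Gq_orbit hq hab g.2 q.out
      calc Quotient.mk (orbitSetoid op) ((g : Equiv.Perm X) q.out)
          = Quotient.mk (orbitSetoid op) q.out := Quotient.sound this
        _ = q := Quotient.out_eq q
    have hbij : Function.Bijective F := by
      constructor
      · intro p p' hpp'
        obtain ⟨i, g, rfl⟩ := hsurj p
        obtain ⟨j, g', rfl⟩ := hsurj p'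
        rw [hFmk, hFmk] at hpp'
        have hij : i = j := by
          have h1 := hπ (ι.symm i) g
          have h2 := hπ (ι.symm j) g'
          rw [hpp'] at h1
          have := h1.symm.trans h2
          have := congrArg ι this
          simpa using this
        subst hij
        have : QuotientGroup.mk g = (QuotientGroup.mk g' : Gq hq hab ⧸ Sq hq hab (ι.symm i)) := by
          rw [QuotientGroup.eq]
          show ((g⁻¹ * g' : Gq hq hab) : Equiv.Perm X) (ι.symm i).out = (ι.symm i).out
          rw [Subgroup.coe_mul, Equiv.Perm.mul_apply, ← hpp']
          simp
        rw [this]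
      · intro a
        have hrel : orbitRel op a (ι.symm (ι (Quotient.mk (orbitSetoid op) a))).out := by
          apply Quotient.exact (s := orbitSetoid op)
          rw [Quotient.out_eq, ι.symm_apply_apply]
        obtain ⟨g, hg, hga⟩ := exists_g hq hab hrel
        exact ⟨⟨ι (Quotient.mk (orbitSetoid op) a),
          Additive.ofMul (QuotientGroup.mk ⟨g, hg⟩)⟩, hga⟩
    have key : ∀ p p' : Σ i : ZMod r, Aq hq hab (ι.symm i),
        F (fpOp (fun i => Aq hq hab (ι.symm i))
          (fun i k => Additive.ofMul (QuotientGroup.mk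
            ⟨sig hq hab (ι.symm (i + k)), sig_mem hq hab _⟩)) p p') = op (F p) (F p') := by
      intro p p'
      obtain ⟨i, g, rfl⟩ := hsurj p
      obtain ⟨j, g', rfl⟩ := hsurj p'
      haveI := hnorm (ι.symm i)
      have hadd : (Additive.ofMul (QuotientGroup.mk g) : Aq hq hab (ι.symm i)) + x' i (j - i) =
          Additive.ofMul (QuotientGroup.mk
            (g * ⟨sig hq hab (ι.symm j), sig_mem hq hab _⟩)) := by
        show (Additive.ofMul (QuotientGroup.mk g) : Aq hq hab (ι.symm i)) +
          Additive.ofMul (QuotientGroup.mk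
            (⟨sig hq hab (ι.symm (i + (j - i))), sig_mem hq hab _⟩ : Gq hq hab)) = _
        have harg : i + (j - i) = j := by ring
        rw [harg, QuotientGroup.mk_mul]
        rfl
      show F ⟨i, Additive.ofMul (QuotientGroup.mk g) + x' i (j - i)⟩ =
        op (F ⟨i, Additive.ofMul (QuotientGroup.mk g)⟩)
          (F ⟨j, Additive.ofMul (QuotientGroup.mk g')⟩)
      refine (congrArg (fun c => F ⟨i, c⟩) hadd).trans ?_
      rw [hFmk, hFmk, hFmk]
      have hj : Quotient.mk (orbitSetoid op) ((g' : Equiv.Perm X) (ι.symm j).out) = ι.symm j :=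
        hπ (ι.symm j) g'
      have hrhs : op ((g : Equiv.Perm X) (ι.symm i).out) ((g' : Equiv.Perm X) (ι.symm j).out) =
          sig hq hab (ι.symm j) ((g : Equiv.Perm X) (ι.symm i).out) := by
        have h0 : ∀ z : X, op ((g : Equiv.Perm X) (ι.symm i).out) z =
            sig hq hab (Quotient.mk (orbitSetoid op) z) ((g : Equiv.Perm X) (ι.symm i).out) :=
          fun z => rfl
        rw [h0, hj]
      rw [hrhs]
      have hcomm := Gq_commute hq hab g.2 (sig_mem hq hab (ι.symm j))
      calc ((g * ⟨sig hq hab (ι.symm j), sig_mem hq hab _⟩ : Gq hq hab) : Equiv.Perm X)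
            (ι.symm i).out
          = ((g : Equiv.Perm X) * sig hq hab (ι.symm j)) (ι.symm i).out := rfl
        _ = (sig hq hab (ι.symm j) * (g : Equiv.Perm X)) (ι.symm i).out := by rw [hcomm]
        _ = sig hq hab (ι.symm j) ((g : Equiv.Perm X) (ι.symm i).out) := rfl
    set e := Equiv.ofBijective F hbij with he
    refine ⟨e.symm, ?_⟩
    intro a b
    have h1 : op a b = F (fpOp (fun i => Aq hq hab (ι.symm i)) x' (e.symm a) (e.symm b)) := by
      rw [key]
      have : ∀ z : X, F (e.symm z) = z := fun z => e.apply_symm_apply z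
      rw [this, this]
    rw [h1]
    show e.symm (e _) = _
    rw [e.symm_apply_apply]

end AbelianQuandleFP

open AbelianQuandleFP in
/-- Every finite abelian quandle with `r` orbits is isomorphic to a
filtered-permutation quandle on `r` components, each component being a finite
abelian group generated by the elements `x i k`, `k ∈ ℤ/r`. -/
theorem abelian_quandle_is_fp {X : Type*} [Finite X] (op : X → X → X)
    (hq : IsQuandleOp op) (hab : IsAbelianOp op) (r : ℕ) (hr : 1 ≤ r)
    (horb : Nat.card (Quotient (orbitSetoid op)) = r) :
    ∃ (A : ZMod r → AddCommGrpCat) (x : (i : ZMod r) → ZMod r → A i),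
      (∀ i, x i 0 = 0) ∧ (∀ i, Finite (A i)) ∧
      (∀ i, AddSubgroup.closure (Set.range (x i)) = ⊤) ∧
      ∃ f : X ≃ Σ i, (A i : Type),
        ∀ a b : X, f (op a b) = fpOp (fun i => (A i : Type)) x (f a) (f b) := by
  letI := Fintype.ofFinite X
  set w : X ≃ Fin (Fintype.card X) := Fintype.equivFin X with hw
  set op' : Fin (Fintype.card X) → Fin (Fintype.card X) → Fin (Fintype.card X) :=
    fun a b => w (op (w.symm a) (w.symm b)) with hop'def
  have hop : ∀ a b : X, op' (w a) (w b) = w (op a b) := by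
    intro a b
    simp [hop'def]
  have hq' : IsQuandleOp op' := by
    constructor
    · intro a b c
      simp only [hop'def, w.symm_apply_apply]
      rw [hq.sd]
    · intro b
      have : (fun a => op' a b) = w ∘ (fun a => op a (w.symm b)) ∘ w.symm := by
        funext a
        rfl
      rw [this]
      exact w.bijective.comp ((hq.bij (w.symm b)).comp w.symm.bijective)
    · intro a
      simp [hop'def, hq.idem]
  have hab' : IsAbelianOp op' := by
    intro a b c
    simp only [hop'def, w.symm_apply_apply]
    rw [hab]
  have horb' : Nat.card (Quotient (orbitSetoid op')) = r := by
    rw [← horb]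
    refine (Nat.card_congr (Quotient.congr w ?_)).symm
    exact fun a b => orbit_iff w op op' hop a b
  obtain ⟨A, x, h1, h2, h3, f', hf'⟩ := main op' hq' hab' r hr horb'
  refine ⟨A, x, h1, h2, h3, w.trans f', ?_⟩
  intro a b
  have : (w.trans f') (op a b) = f' (op' (w a) (w b)) := by
    rw [hop]
    rfl
  rw [this, hf']
  rfl
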